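/- Under the constraints of the order-four family with c₁ = 0, c₂ = 1 (system Γ₁=Γ₂=Γ₃=Γ₄=0 and Γ₂₁=Γ₂₂=Γ₂₃=0), the solution is unique up to the two free polynomial parameters ã₂₂ and b̃₂: any polynomial functions (u₂, v, ã₂₁, b̃₁, a₂₁, b₁, b₂) satisfying the seven identities of the system for all α ∈ ℝ must equal u₂(α) = -(2α-1)(α+1)², v(α) = (α-1)²(α+1)², ã₂₁(α) = α²(α+1), b̃₁(α) = -(1/12)α²(α+1)(5α-7), b₂(α) = (1/12)α²(α+1)², a₂₁(α) = α(α+1)² - ã₂₂(α), b₁(α) = -(1/3)α(2α-3)(α+1)² - b̃₂(α). -/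
import Mathlib

/-- Uniqueness of the order-four family with c₁ = 0, c₂ = 1: any coefficient
functions satisfying the seven identities Γ₁=Γ₂=Γ₃=Γ₄=0, Γ₂₁=Γ₂₂=Γ₂₃=0 for all
real α are given by the stated formulas, up to the free parameters ã₂₂, b̃₂. -/
theorem stmt14 (u₂ v ta21 tb1 a21 b1 b2 ta22 tb2 : ℝ → ℝ)
    (h1 : ∀ α, -(1 - v α) + tb1 α + tb2 α + b1 α + b2 α = α)
    (h2 : ∀ α, (1 - v α)/2 - tb1 α + b2 α = α^2/2)
    (h3 : ∀ α, -(1 - v α)/3 + tb1 α + b2 α = α^3/3)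
    (h4 : ∀ α, (1 - v α)/4 - tb1 α + b2 α = α^4/4)
    (h5 : ∀ α, -(1 - u₂ α) + ta21 α + ta22 α + a21 α = α)
    (h6 : ∀ α, (1 - u₂ α)/2 - ta21 α = α^2/2)
    (h7 : ∀ α, -(1 - u₂ α)/3 + ta21 α = α^3/3) :
    ∀ α : ℝ,
      u₂ α = -(2*α - 1) * (α + 1)^2 ∧
      v α = (α - 1)^2 * (α + 1)^2 ∧
      ta21 α = α^2 * (α + 1) ∧
      tb1 α = -(1/12) * α^2 * (α + 1) * (5*α - 7) ∧
      b2 α = (1/12) * α^2 * (α + 1)^2 ∧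
      a21 α = α * (α + 1)^2 - ta22 α ∧
      b1 α = -(1/3) * α * (2*α - 3) * (α + 1)^2 - tb2 α := by
  intro α
  have e1 := h1 α; have e2 := h2 α; have e3 := h3 α; have e4 := h4 α
  have e5 := h5 α; have e6 := h6 α; have e7 := h7 α
  refine ⟨by nlinarith, by nlinarith, by nlinarith, by nlinarith, by nlinarith,
    by nlinarith, by nlinarith⟩
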